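/- Fix E > 0 and σ² > 0, and let N be a zero-mean real random variable with probability density, variance σ², and finite differential entropy. Define the capacity of the additive-noise channel with noise N under input variance constraint E as C = sup I(X ; X + N), the supremum running over all real random variables X with a probability density, independent of N, with Var(X) ≤ E. Then C ≥ ½·log(1 + E/σ²); that is, the capacity of the non-Gaussian additive-noise channel is at least the capacity of the Gaussian-equivalent channel whose noise is N(0, σ²). -/

import Mathlib

open MeasureTheory ProbabilityTheory Real
open scoped NNReal ENNReal Classical

noncomputable section

open Filter Topology

section AuxLemmas

lemma aux_xlogx {x : ℝ} (hx : 0 ≤ x) : x - 1 ≤ x * Real.log x := by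
  rcases eq_or_lt_of_le hx with h | h
  · simp [← h]
  · have h1 : Real.log x⁻¹ ≤ x⁻¹ - 1 := Real.log_le_sub_one_of_pos (by positivity)
    rw [Real.log_inv] at h1
    have h2 := mul_le_mul_of_nonneg_left h1 h.le
    rw [mul_sub, mul_inv_cancel₀ (ne_of_gt h)] at h2
    nlinarith

lemma aux_int_sq_exp {b : ℝ} (hb : 0 < b) :
    Integrable (fun x : ℝ => x ^ 2 * Real.exp (-b * x ^ 2)) := by
  have h2 : Integrable (fun x : ℝ => (2 / b) * Real.exp (-(b / 2) * x ^ 2)) :=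
    (integrable_exp_neg_mul_sq (by positivity)).const_mul _
  refine h2.mono ?_ (ae_of_all _ fun x => ?_)
  · exact ((continuous_pow 2).mul (by continuity)).aestronglyMeasurable
  · have hx : 0 ≤ x ^ 2 * Real.exp (-b * x ^ 2) := by positivity
    rw [Real.norm_eq_abs, Real.norm_eq_abs, abs_of_nonneg hx, abs_of_nonneg (by positivity)]
    have key : b * x ^ 2 ≤ 2 * Real.exp (b / 2 * x ^ 2) := by
      have := Real.add_one_le_exp (b / 2 * x ^ 2)
      nlinarith [Real.exp_nonneg (b / 2 * x ^ 2)]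
    have hexp : Real.exp (-b * x ^ 2) = Real.exp (-(b/2) * x^2) / Real.exp (b/2 * x^2) := by
      rw [← Real.exp_sub]; ring_nf
    have hB := Real.exp_pos (b / 2 * x ^ 2)
    have hA := Real.exp_pos (-(b / 2) * x ^ 2)
    rw [hexp, mul_div_assoc', div_le_iff₀ hB]
    have h3 := mul_le_mul_of_nonneg_right key hA.le
    rw [div_mul_eq_mul_div, div_mul_eq_mul_div, le_div_iff₀ hb]
    nlinarith

lemma aux_tendsto_xexp {b : ℝ} (hb : 0 < b) :
    Tendsto (fun x : ℝ => -x * Real.exp (-b * x ^ 2) / (2 * b)) (cocompact ℝ) (𝓝 0) := by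
  have h := tendsto_rpow_abs_mul_exp_neg_mul_sq_cocompact hb 1
  have h2 : Tendsto (fun x : ℝ => |x| ^ (1:ℝ) * Real.exp (-b * x ^ 2) / (2 * b)) (cocompact ℝ) (𝓝 0) := by
    simpa using h.div_const (2 * b)
  refine squeeze_zero_norm (fun x => le_of_eq ?_) h2
  rw [Real.rpow_one, Real.norm_eq_abs, abs_div, abs_mul, abs_neg, abs_of_pos (by positivity : (0:ℝ) < 2*b), abs_of_pos (Real.exp_pos _)]

lemma aux_integral_sq_exp {b : ℝ} (hb : 0 < b) :
    ∫ x : ℝ, x ^ 2 * Real.exp (-b * x ^ 2) = Real.sqrt (π / b) / (2 * b) := by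
  set F : ℝ → ℝ := fun x => -x * Real.exp (-b * x ^ 2) / (2 * b) with hF
  set F' : ℝ → ℝ := fun x => x ^ 2 * Real.exp (-b * x ^ 2) - Real.exp (-b * x ^ 2) / (2 * b) with hF'
  have hderiv : ∀ x : ℝ, HasDerivAt F (F' x) x := by
    intro x
    have h1 : HasDerivAt (fun x : ℝ => -b * x ^ 2) (-b * (2 * x)) x := by
      simpa using ((hasDerivAt_pow 2 x).const_mul (-b))
    have h2 : HasDerivAt (fun x : ℝ => Real.exp (-b * x ^ 2)) (Real.exp (-b * x ^ 2) * (-b * (2 * x))) x := (Real.hasDerivAt_exp _).comp x h1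
    have h3 := ((hasDerivAt_id x).neg.mul h2).div_const (2 * b)
    refine h3.congr_deriv ?_
    simp only [hF', Pi.neg_apply, id]
    field_simp
    ring
  have hint : Integrable F' := ((aux_int_sq_exp hb).sub (((integrable_exp_neg_mul_sq hb)).div_const _))
  have htop : Tendsto F atTop (𝓝 0) := (aux_tendsto_xexp hb).mono_left (le_sup_right.trans_eq cocompact_eq_atBot_atTop.symm)
  have hbot : Tendsto F atBot (𝓝 0) := (aux_tendsto_xexp hb).mono_left (le_sup_left.trans_eq cocompact_eq_atBot_atTop.symm)
  have hIic : ∫ x in Set.Iic (0:ℝ), F' x = F 0 - 0 :=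
    integral_Iic_of_hasDerivAt_of_tendsto' (fun x _ => hderiv x) hint.integrableOn hbot
  have hIoi : ∫ x in Set.Ioi (0:ℝ), F' x = 0 - F 0 :=
    integral_Ioi_of_hasDerivAt_of_tendsto' (fun x _ => hderiv x) hint.integrableOn htop
  have hsplit : ∫ x : ℝ, F' x = 0 := by
    rw [← intervalIntegral.integral_Iic_add_Ioi hint.integrableOn hint.integrableOn, hIic, hIoi]; ring
  have : ∫ x : ℝ, x ^ 2 * Real.exp (-b * x ^ 2)
      = (∫ x : ℝ, F' x) + ∫ x : ℝ, Real.exp (-b * x ^ 2) / (2 * b) := by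
    rw [← integral_add hint ((integrable_exp_neg_mul_sq hb).div_const _)]
    congr 1; funext x; simp only [hF']; ring
  rw [this, hsplit, zero_add, integral_div, integral_gaussian]

lemma aux_integral_x_exp {b : ℝ} (hb : 0 < b) :
    ∫ x : ℝ, x * Real.exp (-b * x ^ 2) = 0 := by
  set F : ℝ → ℝ := fun x => -Real.exp (-b * x ^ 2) / (2 * b) with hF
  have hderiv : ∀ x : ℝ, HasDerivAt F (x * Real.exp (-b * x ^ 2)) x := by
    intro x
    have h1 : HasDerivAt (fun x : ℝ => -b * x ^ 2) (-b * (2 * x)) x := by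
      simpa using ((hasDerivAt_pow 2 x).const_mul (-b))
    have h2 := ((Real.hasDerivAt_exp _).comp x h1).neg.div_const (2 * b)
    refine h2.congr_deriv ?_
    field_simp
  have hint : Integrable (fun x : ℝ => x * Real.exp (-b * x ^ 2)) := integrable_mul_exp_neg_mul_sq hb
  have hten : Tendsto F (cocompact ℝ) (𝓝 0) := by
    have h := tendsto_rpow_abs_mul_exp_neg_mul_sq_cocompact hb 0
    have h2 : Tendsto (fun x : ℝ => Real.exp (-b * x ^ 2) / (2 * b)) (cocompact ℝ) (𝓝 0) := by
      simpa using h.div_const (2 * b)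
    refine squeeze_zero_norm (fun x => le_of_eq ?_) h2
    rw [hF]
    rw [Real.norm_eq_abs, abs_div, abs_neg, abs_of_pos (by positivity : (0:ℝ) < 2*b), abs_of_pos (Real.exp_pos _)]
  have htop : Tendsto F atTop (𝓝 0) := hten.mono_left (le_sup_right.trans_eq cocompact_eq_atBot_atTop.symm)
  have hbot : Tendsto F atBot (𝓝 0) := hten.mono_left (le_sup_left.trans_eq cocompact_eq_atBot_atTop.symm)
  have hIic : ∫ x in Set.Iic (0:ℝ), x * Real.exp (-b * x ^ 2) = F 0 - 0 :=
    integral_Iic_of_hasDerivAt_of_tendsto' (fun x _ => hderiv x) hint.integrableOn hbot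
  have hIoi : ∫ x in Set.Ioi (0:ℝ), x * Real.exp (-b * x ^ 2) = 0 - F 0 :=
    integral_Ioi_of_hasDerivAt_of_tendsto' (fun x _ => hderiv x) hint.integrableOn htop
  rw [← intervalIntegral.integral_Iic_add_Ioi hint.integrableOn hint.integrableOn, hIic, hIoi]
  ring

lemma aux_integral_gaussianReal {v : ℝ≥0} (hv : v ≠ 0) (g : ℝ → ℝ) :
    ∫ x, g x ∂(gaussianReal 0 v) = ∫ x, gaussianPDFReal 0 v x * g x := by
  rw [gaussianReal_of_var_ne_zero 0 hv]
  have : gaussianPDF 0 v = fun x => ((gaussianPDFReal 0 v x).toNNReal : ℝ≥0∞) := by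
    funext x; rfl
  rw [this, integral_withDensity_eq_integral_smul ((measurable_gaussianPDFReal 0 v).real_toNNReal) g]
  congr 1; funext x
  rw [NNReal.smul_def, Real.coe_toNNReal _ (gaussianPDFReal_nonneg 0 v x), smul_eq_mul]

lemma aux_gaussianPDFReal_eq {v : ℝ≥0} (x : ℝ) :
    gaussianPDFReal 0 v x = (Real.sqrt (2 * π * v))⁻¹ * Real.exp (-(1 / (2 * v)) * x ^ 2) := by
  rw [gaussianPDFReal]
  congr 1
  rw [sub_zero]
  ring

section moments
variable {v : ℝ≥0}

lemma aux_vpos (hv : v ≠ 0) : (0:ℝ) < (v:ℝ) := by positivity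
lemma aux_bpos (hv : v ≠ 0) : (0:ℝ) < 1 / (2 * (v:ℝ)) := by
  have := aux_vpos hv; positivity

lemma aux_sqrt_eq (hv : v ≠ 0) : Real.sqrt (π / (1 / (2 * (v:ℝ)))) = Real.sqrt (2 * π * v) := by
  congr 1
  field_simp

lemma aux_gaussian_mean (hv : v ≠ 0) : ∫ x, x ∂(gaussianReal 0 v) = 0 := by
  rw [aux_integral_gaussianReal hv]
  have : ∀ x : ℝ, gaussianPDFReal 0 v x * x
      = (Real.sqrt (2 * π * v))⁻¹ * (x * Real.exp (-(1 / (2 * v)) * x ^ 2)) := by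
    intro x; rw [aux_gaussianPDFReal_eq]; ring
  simp_rw [this, integral_const_mul, aux_integral_x_exp (aux_bpos hv), mul_zero]

lemma aux_gaussian_sq (hv : v ≠ 0) : ∫ x, x ^ 2 ∂(gaussianReal 0 v) = (v : ℝ) := by
  rw [aux_integral_gaussianReal hv]
  have : ∀ x : ℝ, gaussianPDFReal 0 v x * x ^ 2
      = (Real.sqrt (2 * π * v))⁻¹ * (x ^ 2 * Real.exp (-(1 / (2 * v)) * x ^ 2)) := by
    intro x; rw [aux_gaussianPDFReal_eq]; ring
  simp_rw [this, integral_const_mul, aux_integral_sq_exp (aux_bpos hv), aux_sqrt_eq hv]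
  have hs : (0:ℝ) < Real.sqrt (2 * π * v) := by
    have := aux_vpos hv
    refine Real.sqrt_pos.2 (by positivity)
  have hvr := aux_vpos hv
  field_simp

lemma aux_gaussian_int_sq (hv : v ≠ 0) :
    Integrable (fun x : ℝ => x ^ 2) (gaussianReal 0 v) := by
  rw [gaussianReal_of_var_ne_zero 0 hv]
  have hmeq : gaussianPDF 0 v = fun x => ((gaussianPDFReal 0 v x).toNNReal : ℝ≥0∞) := rfl
  rw [hmeq, integrable_withDensity_iff_integrable_smul ((measurable_gaussianPDFReal 0 v).real_toNNReal)]
  have : (fun x : ℝ => (gaussianPDFReal 0 v x).toNNReal • (x ^ 2 : ℝ))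
      = fun x => (Real.sqrt (2 * π * v))⁻¹ * (x ^ 2 * Real.exp (-(1 / (2 * v)) * x ^ 2)) := by
    funext x
    rw [NNReal.smul_def, Real.coe_toNNReal _ (gaussianPDFReal_nonneg 0 v x), smul_eq_mul,
      aux_gaussianPDFReal_eq]
    ring
  rw [this]
  exact (aux_int_sq_exp (aux_bpos hv)).const_mul _

lemma aux_gaussian_memL2 (hv : v ≠ 0) : MemLp (fun x : ℝ => x) 2 (gaussianReal 0 v) := by
  have := (memLp_two_iff_integrable_sq (aestronglyMeasurable_id (μ := gaussianReal 0 v))).2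
    (by simpa [id] using aux_gaussian_int_sq hv)
  exact this

lemma aux_gaussian_variance (hv : v ≠ 0) :
    variance (fun x : ℝ => x) (gaussianReal 0 v) = (v : ℝ) := by
  rw [variance_eq_sub (aux_gaussian_memL2 hv), aux_gaussian_mean hv]
  simp only [Pi.pow_apply]
  rw [aux_gaussian_sq hv]
  ring

lemma aux_gaussian_int_id (hv : v ≠ 0) :
    Integrable (fun x : ℝ => x) (gaussianReal 0 v) :=
  (aux_gaussian_memL2 hv).integrable (by norm_num)

end moments

lemma aux_gaussian_conv {E σ2 : ℝ≥0} (hE : E ≠ 0) (hσ : σ2 ≠ 0) (y : ℝ) :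
    ∫ x, gaussianPDFReal 0 σ2 (y - x) ∂(gaussianReal 0 E)
      = gaussianPDFReal 0 (E + σ2) y := by
  have hEr : (0:ℝ) < (E:ℝ) := by positivity
  have hσr : (0:ℝ) < (σ2:ℝ) := by positivity
  have hsr : (0:ℝ) < ((E:ℝ) + σ2) := by linarith
  set b : ℝ := ((E:ℝ) + σ2) / (2 * E * σ2) with hb
  have hbpos : 0 < b := by positivity
  set c : ℝ := (E:ℝ) * y / ((E:ℝ) + σ2) with hc
  have hsqrtb : (0:ℝ) < Real.sqrt (π / b) := Real.sqrt_pos.2 (by positivity)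
  have hptwise : ∀ x : ℝ, gaussianPDFReal 0 E x * gaussianPDFReal 0 σ2 (y - x)
      = (gaussianPDFReal 0 (E + σ2) y * (Real.sqrt (π / b))⁻¹) * Real.exp (-b * (x - c) ^ 2) := by
    intro x
    rw [aux_gaussianPDFReal_eq, aux_gaussianPDFReal_eq, aux_gaussianPDFReal_eq]
    have hconst : Real.sqrt (2 * π * E) * Real.sqrt (2 * π * σ2)
        = Real.sqrt (2 * π * ((E:ℝ) + σ2)) * Real.sqrt (π / b) := by
      rw [← Real.sqrt_mul (by positivity), ← Real.sqrt_mul (by positivity)]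
      congr 1
      rw [hb, div_div_eq_mul_div]
      field_simp
    have hexp : Real.exp (-(1 / (2 * E)) * x ^ 2) * Real.exp (-(1 / (2 * σ2)) * (y - x) ^ 2)
        = Real.exp (-(1 / (2 * ((E:ℝ) + σ2))) * y ^ 2) * Real.exp (-b * (x - c) ^ 2) := by
      rw [← Real.exp_add, ← Real.exp_add]
      congr 1
      rw [hb, hc]
      field_simp
      ring
    have h1 : ((E:ℝ) + σ2 : ℝ) = ((E + σ2 : ℝ≥0) : ℝ) := by push_cast; ring
    rw [← h1]
    calc (Real.sqrt (2 * π * E))⁻¹ * Real.exp (-(1 / (2 * E)) * x ^ 2)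
          * ((Real.sqrt (2 * π * σ2))⁻¹ * Real.exp (-(1 / (2 * σ2)) * (y - x) ^ 2))
        = (Real.sqrt (2 * π * E) * Real.sqrt (2 * π * σ2))⁻¹
          * (Real.exp (-(1 / (2 * E)) * x ^ 2) * Real.exp (-(1 / (2 * σ2)) * (y - x) ^ 2)) := by
          rw [mul_inv]; ring
      _ = (Real.sqrt (2 * π * ((E:ℝ) + σ2)) * Real.sqrt (π / b))⁻¹
          * (Real.exp (-(1 / (2 * ((E:ℝ) + σ2))) * y ^ 2) * Real.exp (-b * (x - c) ^ 2)) := by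
          rw [hconst, hexp]
      _ = ((Real.sqrt (2 * π * ((E:ℝ) + σ2)))⁻¹ * Real.exp (-(1 / (2 * ((E:ℝ) + σ2))) * y ^ 2)
          * (Real.sqrt (π / b))⁻¹) * Real.exp (-b * (x - c) ^ 2) := by
          rw [mul_inv]; ring
  rw [aux_integral_gaussianReal hE]
  simp_rw [hptwise]
  rw [integral_const_mul]
  have hshift : ∫ x : ℝ, Real.exp (-b * (x - c) ^ 2) = ∫ x : ℝ, Real.exp (-b * x ^ 2) :=
    integral_sub_right_eq_self (fun x => Real.exp (-b * x ^ 2)) c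
  rw [hshift, integral_gaussian, mul_assoc, inv_mul_cancel₀ (ne_of_gt hsqrtb), mul_one]


end AuxLemmas

/-- Kullback–Leibler divergence `D(P ‖ Q) = ∫ log (dP/dQ) dP` when `P ≪ Q` and the
integral is well defined; `∞` otherwise. -/
def klDiv {α : Type*} [MeasurableSpace α] (P Q : Measure α) : EReal :=
  if P ≪ Q ∧ Integrable (fun x => Real.log (P.rnDeriv Q x).toReal) P
  then ((∫ x, Real.log (P.rnDeriv Q x).toReal ∂P : ℝ) : EReal)
  else ⊤

/-- Mutual information `I(X ; Y) = D(P_(X,Y) ‖ P_X ⊗ P_Y)`. -/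
def mutualInfo {Ω : Type*} [MeasurableSpace Ω] (μ : Measure Ω) (X Y : Ω → ℝ) : EReal :=
  klDiv (μ.map (fun ω => (X ω, Y ω))) ((μ.map X).prod (μ.map Y))

/-- Differential entropy `h(P) = -∫ f log f` where `f = dP/dx`. -/
def diffEntropy (P : Measure ℝ) : ℝ :=
  -∫ x, (P.rnDeriv volume x).toReal * Real.log (P.rnDeriv volume x).toReal

/-- `P` has a density and a well-defined, finite differential entropy. -/
def HasFiniteDiffEntropy (P : Measure ℝ) : Prop :=
  P ≪ volume ∧
    Integrable (fun x => (P.rnDeriv volume x).toReal * Real.log (P.rnDeriv volume x).toReal)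

/-- The mutual information `I(X ; X + N)` of the additive-noise channel with input law `P`
and noise law `Q`, input and noise being independent (canonical product-space model). -/
def rate (P Q : Measure ℝ) : EReal :=
  mutualInfo (P.prod Q) (fun p => p.1) (fun p => p.1 + p.2)

/-- The capacity of the additive-noise channel with zero-mean noise of
variance `σ2`, density and finite differential entropy, under input variance constraint
`E`, is at least the Gaussian-equivalent capacity `½ log (1 + E/σ²)`. -/
theorem stmt_6 (E σ2 : ℝ≥0) (hE : 0 < E) (hσ2 : 0 < σ2)
    (Q : Measure ℝ) [IsProbabilityMeasure Q] (hQac : Q ≪ volume)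
    (hQint : Integrable (fun x => x) Q) (hQmean : ∫ x, x ∂Q = 0)
    (hQL2 : MemLp (fun x => x) 2 Q) (hQvar : variance (fun x => x) Q = (σ2 : ℝ))
    (hQent : HasFiniteDiffEntropy Q) :
    ((Real.log (1 + (E : ℝ) / (σ2 : ℝ)) / 2 : ℝ) : EReal)
      ≤ sSup {r : EReal | ∃ P : Measure ℝ, IsProbabilityMeasure P ∧ P ≪ volume ∧
          MemLp (fun x => x) 2 P ∧ variance (fun x => x) P ≤ (E : ℝ) ∧
          r = rate P Q} := by
  have hE' : E ≠ 0 := hE.ne'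
  have hσ' : σ2 ≠ 0 := hσ2.ne'
  have hs' : E + σ2 ≠ 0 := by positivity
  have hEr : (0:ℝ) < (E:ℝ) := by positivity
  have hσr : (0:ℝ) < (σ2:ℝ) := by positivity
  have hsr : (0:ℝ) < (E:ℝ) + (σ2:ℝ) := by linarith
  set P : Measure ℝ := gaussianReal 0 E with hP
  have hmem : rate P Q ∈ {r : EReal | ∃ P : Measure ℝ, IsProbabilityMeasure P ∧ P ≪ volume ∧
      MemLp (fun x => x) 2 P ∧ variance (fun x => x) P ≤ (E : ℝ) ∧ r = rate P Q} :=
    ⟨P, inferInstance, gaussianReal_absolutelyContinuous 0 hE', aux_gaussian_memL2 hE',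
      le_of_eq (aux_gaussian_variance hE'), rfl⟩
  refine le_trans ?_ (le_sSup hmem)
  rw [rate, mutualInfo]
  set μ : Measure (ℝ × ℝ) := P.prod Q with hμ
  have hT : Measurable (fun p : ℝ × ℝ => (p.1, p.1 + p.2)) :=
    measurable_fst.prodMk (measurable_fst.add measurable_snd)
  have hYm : Measurable (fun p : ℝ × ℝ => p.1 + p.2) := measurable_fst.add measurable_snd
  have hmap1 : μ.map (fun p : ℝ × ℝ => p.1) = P := by
    rw [show (fun p : ℝ × ℝ => p.1) = Prod.fst from rfl, Measure.map_fst_prod]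
    simp
  set PQ : Measure ℝ := μ.map (fun p : ℝ × ℝ => p.1 + p.2) with hPQ
  set J : Measure (ℝ × ℝ) := μ.map (fun p : ℝ × ℝ => (p.1, p.1 + p.2)) with hJ
  rw [hmap1]
  show ((log (1 + (E : ℝ) / (σ2 : ℝ)) / 2 : ℝ) : EReal) ≤ klDiv J (P.prod PQ)
  set pm : Measure (ℝ × ℝ) := P.prod PQ with hpm
  have hPQprob : IsProbabilityMeasure PQ := Measure.isProbabilityMeasure_map hYm.aemeasurable
  have hJprob : IsProbabilityMeasure J := Measure.isProbabilityMeasure_map hT.aemeasurable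
  rw [klDiv]
  split_ifs with h
  swap
  · exact le_top
  obtain ⟨hac, hint⟩ := h
  rw [EReal.coe_le_coe_iff]
  -- the mismatched-channel density ratio
  set ρr : ℝ × ℝ → ℝ := fun z => gaussianPDFReal 0 σ2 (z.2 - z.1) / gaussianPDFReal 0 (E + σ2) z.2
    with hρr
  have hρrpos : ∀ z, 0 < ρr z := fun z =>
    div_pos (gaussianPDFReal_pos _ _ _ hσ') (gaussianPDFReal_pos _ _ _ hs')
  have hρrmeas : Measurable ρr :=
    ((measurable_gaussianPDFReal 0 σ2).comp (measurable_snd.sub measurable_fst)).div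
      ((measurable_gaussianPDFReal 0 (E + σ2)).comp measurable_snd)
  set ρ : ℝ × ℝ → ℝ≥0∞ := fun z => ENNReal.ofReal (ρr z) with hρ
  have hρmeas : Measurable ρ := hρrmeas.ennreal_ofReal
  set M : Measure (ℝ × ℝ) := pm.withDensity ρ with hM
  -- step 1 : mass of M is at most 1
  have hsqconst : (0:ℝ) < (Real.sqrt (2 * π * (σ2:ℝ)))⁻¹ := by
    have : (0:ℝ) < Real.sqrt (2 * π * (σ2:ℝ)) := Real.sqrt_pos.2 (by positivity)
    positivity
  have hMle : M Set.univ ≤ 1 := by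
    have hinner : ∀ y : ℝ, ∫⁻ x, ρ (x, y) ∂P = 1 := by
      intro y
      have hptw : ∀ x : ℝ, ρ (x, y) = ENNReal.ofReal (gaussianPDFReal 0 σ2 (y - x))
          * ENNReal.ofReal ((gaussianPDFReal 0 (E + σ2) y)⁻¹) := by
        intro x
        rw [hρ]
        simp only [hρr]
        rw [div_eq_mul_inv, ENNReal.ofReal_mul (gaussianPDFReal_nonneg _ _ _)]
      simp_rw [hptw]
      have hfm : Measurable (fun x : ℝ => ENNReal.ofReal (gaussianPDFReal 0 σ2 (y - x))) :=
        (((measurable_gaussianPDFReal 0 σ2).comp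
          (measurable_const.sub measurable_id)).ennreal_ofReal)
      rw [lintegral_mul_const _ hfm]
      have hI : Integrable (fun x => gaussianPDFReal 0 σ2 (y - x)) P := by
        refine (integrable_const ((Real.sqrt (2 * π * (σ2:ℝ)))⁻¹)).mono
          ((measurable_gaussianPDFReal 0 σ2).comp
            (measurable_const.sub measurable_id)).aestronglyMeasurable
          (Filter.Eventually.of_forall fun x => ?_)
        rw [Real.norm_eq_abs, Real.norm_eq_abs, abs_of_nonneg (gaussianPDFReal_nonneg _ _ _),
          abs_of_pos hsqconst, aux_gaussianPDFReal_eq]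
        have hexple : Real.exp (-(1 / (2 * (σ2:ℝ))) * (y - x) ^ 2) ≤ 1 := by
          rw [Real.exp_le_one_iff]
          have : (0:ℝ) ≤ (1 / (2 * (σ2:ℝ))) * (y - x) ^ 2 := by positivity
          linarith
        calc (Real.sqrt (2 * π * (σ2:ℝ)))⁻¹ * Real.exp (-(1 / (2 * (σ2:ℝ))) * (y - x) ^ 2)
            ≤ (Real.sqrt (2 * π * (σ2:ℝ)))⁻¹ * 1 := by
              exact mul_le_mul_of_nonneg_left hexple hsqconst.le
          _ = (Real.sqrt (2 * π * (σ2:ℝ)))⁻¹ := mul_one _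
      rw [← ofReal_integral_eq_lintegral_ofReal hI
        (Filter.Eventually.of_forall fun x => gaussianPDFReal_nonneg _ _ _)]
      rw [hP] at hI ⊢
      rw [aux_gaussian_conv hE' hσ' y, ← ENNReal.ofReal_mul (gaussianPDFReal_nonneg _ _ _),
        mul_inv_cancel₀ (gaussianPDFReal_pos _ _ _ hs').ne', ENNReal.ofReal_one]
    rw [hM, withDensity_apply _ MeasurableSet.univ, Measure.restrict_univ, hpm,
      lintegral_prod_symm _ hρmeas.aemeasurable]
    simp_rw [hinner]
    rw [lintegral_one, measure_univ]
  have hMfin : IsFiniteMeasure M := ⟨lt_of_le_of_lt hMle ENNReal.one_lt_top⟩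
  -- step 3 : J ≪ M
  have hJM : J ≪ M := hac.trans (withDensity_absolutelyContinuous' hρmeas.aemeasurable
    (Filter.Eventually.of_forall fun z => (ENNReal.ofReal_pos.2 (hρrpos z)).ne'))
  -- step 4 : a.e. decomposition of the log-density
  have hlog : (fun z => Real.log (J.rnDeriv pm z).toReal)
      =ᵐ[J] fun z => Real.log ((J.rnDeriv M z).toReal) + Real.log (ρr z) := by
    have h1 : M.rnDeriv pm =ᵐ[pm] ρ := Measure.rnDeriv_withDensity pm hρmeas
    have h2 : J.rnDeriv M * M.rnDeriv pm =ᵐ[pm] J.rnDeriv pm := Measure.rnDeriv_mul_rnDeriv hJM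
    have h1' : M.rnDeriv pm =ᵐ[J] ρ := hac.ae_le h1
    have h2' : J.rnDeriv M * M.rnDeriv pm =ᵐ[J] J.rnDeriv pm := hac.ae_le h2
    have hpos : ∀ᵐ z ∂J, 0 < J.rnDeriv M z := Measure.rnDeriv_pos hJM
    have hfin : ∀ᵐ z ∂J, J.rnDeriv M z ≠ ∞ := hJM.ae_le (Measure.rnDeriv_ne_top J M)
    filter_upwards [h1', h2', hpos, hfin] with z hz1 hz2 hzp hzf
    rw [← hz2, Pi.mul_apply, hz1, ENNReal.toReal_mul, ENNReal.toReal_ofReal (hρrpos z).le,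
      Real.log_mul (ENNReal.toReal_pos hzp.ne' hzf).ne' (hρrpos z).ne']
  -- step 5 : the explicit integral of log ρr
  have hLg : ∀ z : ℝ × ℝ, Real.log (ρr z)
      = (Real.log (Real.sqrt (2 * π * ((E:ℝ) + σ2))) - Real.log (Real.sqrt (2 * π * (σ2:ℝ))))
        + ((1 / (2 * ((E:ℝ) + σ2))) * z.2 ^ 2 - (1 / (2 * (σ2:ℝ))) * (z.2 - z.1) ^ 2) := by
    intro z
    have h1 : (((E + σ2 : ℝ≥0)) : ℝ) = (E:ℝ) + σ2 := by push_cast; ring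
    rw [hρr]
    simp only
    rw [Real.log_div (gaussianPDFReal_pos _ _ _ hσ').ne' (gaussianPDFReal_pos _ _ _ hs').ne',
      aux_gaussianPDFReal_eq, aux_gaussianPDFReal_eq,
      Real.log_mul (by positivity) (Real.exp_pos _).ne',
      Real.log_mul (by positivity) (Real.exp_pos _).ne',
      Real.log_exp, Real.log_exp, Real.log_inv, Real.log_inv, h1]
    ring
  have hQsq : ∫ x, x ^ 2 ∂Q = (σ2 : ℝ) := by
    have := variance_eq_sub hQL2
    rw [hQmean] at this
    simp only [Pi.pow_apply] at this
    rw [hQvar] at this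
    linarith [this]
  have hQsqint : Integrable (fun x : ℝ => x ^ 2) Q := by
    simpa [id] using (memLp_two_iff_integrable_sq hQL2.aestronglyMeasurable).1 hQL2
  -- integrability of coordinate squares over μ
  have hmap2 : μ.map (fun p : ℝ × ℝ => p.2) = Q := by
    rw [show (fun p : ℝ × ℝ => p.2) = Prod.snd from rfl, Measure.map_snd_prod]
    simp
  have hsqmeas : AEStronglyMeasurable (fun x : ℝ => x ^ 2) (μ.map (fun p : ℝ × ℝ => p.1)) :=
    (measurable_id.pow_const 2).aestronglyMeasurable
  have hsqmeas2 : AEStronglyMeasurable (fun x : ℝ => x ^ 2) (μ.map (fun p : ℝ × ℝ => p.2)) :=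
    (measurable_id.pow_const 2).aestronglyMeasurable
  have hx2int : Integrable (fun p : ℝ × ℝ => p.1 ^ 2) μ := by
    have h := aux_gaussian_int_sq hE'
    rw [← hP, ← hmap1] at h
    have := (integrable_map_measure hsqmeas measurable_fst.aemeasurable).1 h
    exact this
  have hn2int : Integrable (fun p : ℝ × ℝ => p.2 ^ 2) μ := by
    have h := hQsqint
    rw [← hmap2] at h
    have := (integrable_map_measure hsqmeas2 measurable_snd.aemeasurable).1 h
    exact this
  have hxnint : Integrable (fun p : ℝ × ℝ => p.1 * p.2) μ :=
    Integrable.mul_prod (aux_gaussian_int_id hE') hQint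
  have hx2val : ∫ p, p.1 ^ 2 ∂μ = (E : ℝ) := by
    have h := aux_gaussian_sq hE'
    rw [← hP, ← hmap1, integral_map measurable_fst.aemeasurable hsqmeas] at h
    exact h
  have hn2val : ∫ p, p.2 ^ 2 ∂μ = (σ2 : ℝ) := by
    have h := hQsq
    rw [← hmap2, integral_map measurable_snd.aemeasurable hsqmeas2] at h
    exact h
  have hxnval : ∫ p, p.1 * p.2 ∂μ = 0 := by
    rw [hμ, integral_prod_mul (fun x : ℝ => x) (fun x : ℝ => x), aux_gaussian_mean hE', zero_mul]
  have hxn2int : Integrable (fun p : ℝ × ℝ => 2 * (p.1 * p.2) + p.2 ^ 2) μ :=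
    (hxnint.const_mul 2).add hn2int
  have hsum2int : Integrable (fun p : ℝ × ℝ => (p.1 + p.2) ^ 2) μ := by
    have : (fun p : ℝ × ℝ => (p.1 + p.2) ^ 2)
        = fun p : ℝ × ℝ => p.1 ^ 2 + (2 * (p.1 * p.2) + p.2 ^ 2) := by funext p; ring
    rw [this]
    exact hx2int.add hxn2int
  have hsum2val : ∫ p, (p.1 + p.2) ^ 2 ∂μ = (E : ℝ) + σ2 := by
    have h1 : ∫ p, (p.1 + p.2) ^ 2 ∂μ = ∫ p : ℝ × ℝ, (p.1 ^ 2 + (2 * (p.1 * p.2) + p.2 ^ 2)) ∂μ := by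
      congr 1; funext p; ring
    rw [h1, integral_add hx2int hxn2int, integral_add (hxnint.const_mul 2) hn2int,
      integral_const_mul, hx2val, hn2val, hxnval]
    ring
  -- integrability and value of log ρr over J
  have hLgmeas : Measurable (fun z => Real.log (ρr z)) := Real.measurable_log.comp hρrmeas
  have hcompeq : ((fun z => Real.log (ρr z)) ∘ (fun p : ℝ × ℝ => (p.1, p.1 + p.2)))
      = fun p : ℝ × ℝ =>
        (Real.log (Real.sqrt (2 * π * ((E:ℝ) + σ2))) - Real.log (Real.sqrt (2 * π * (σ2:ℝ))))
        + ((1 / (2 * ((E:ℝ) + σ2))) * (p.1 + p.2) ^ 2 - (1 / (2 * (σ2:ℝ))) * p.2 ^ 2) := by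
    funext p
    rw [Function.comp_apply, hLg]
    simp only
    ring_nf
  have hcompint : Integrable ((fun z => Real.log (ρr z)) ∘ (fun p : ℝ × ℝ => (p.1, p.1 + p.2))) μ := by
    rw [hcompeq]
    exact (integrable_const _).add ((hsum2int.const_mul _).sub (hn2int.const_mul _))
  have hρint : Integrable (fun z => Real.log (ρr z)) J :=
    (integrable_map_measure hLgmeas.aestronglyMeasurable hT.aemeasurable).2 hcompint
  have hdiffint : Integrable (fun p : ℝ × ℝ =>
      (1 / (2 * ((E:ℝ) + σ2))) * (p.1 + p.2) ^ 2 - (1 / (2 * (σ2:ℝ))) * p.2 ^ 2) μ :=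
    (hsum2int.const_mul _).sub (hn2int.const_mul _)
  have hρval : ∫ z, Real.log (ρr z) ∂J = Real.log (1 + (E:ℝ) / σ2) / 2 := by
    rw [hJ, integral_map hT.aemeasurable hLgmeas.aestronglyMeasurable]
    have h2 : ∫ p : ℝ × ℝ, Real.log (ρr (p.1, p.1 + p.2)) ∂μ = ∫ p : ℝ × ℝ,
        ((Real.log (Real.sqrt (2 * π * ((E:ℝ) + σ2))) - Real.log (Real.sqrt (2 * π * (σ2:ℝ))))
        + ((1 / (2 * ((E:ℝ) + σ2))) * (p.1 + p.2) ^ 2 - (1 / (2 * (σ2:ℝ))) * p.2 ^ 2)) ∂μ := by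
      refine integral_congr_ae (Filter.Eventually.of_forall fun p => ?_)
      exact congrFun hcompeq p
    rw [h2]
    rw [integral_add (integrable_const _) hdiffint,
      integral_sub (hsum2int.const_mul _) (hn2int.const_mul _),
      integral_const_mul, integral_const_mul, hsum2val, hn2val, integral_const]
    simp only [measure_univ, ENNReal.toReal_one, smul_eq_mul, one_mul, probReal_univ]
    rw [Real.log_sqrt (by positivity), Real.log_sqrt (by positivity)]
    rw [show Real.log (2 * π * ((E:ℝ) + σ2)) / 2 - Real.log (2 * π * (σ2:ℝ)) / 2
        = (Real.log (2 * π * ((E:ℝ) + σ2)) - Real.log (2 * π * (σ2:ℝ))) / 2 by ring,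
      ← Real.log_div (by positivity) (by positivity)]
    have h4 : (2 * π * ((E:ℝ) + σ2)) / (2 * π * (σ2:ℝ)) = 1 + (E:ℝ) / σ2 := by
      field_simp
      ring
    rw [h4]
    have h5 : (1 / (2 * ((E:ℝ) + σ2))) * ((E:ℝ) + σ2) - (1 / (2 * (σ2:ℝ))) * σ2 = 0 := by
      field_simp
      ring
    rw [h5, add_zero]
  -- step 6 : Gibbs' inequality
  have hlogu_int : Integrable (fun z => Real.log ((J.rnDeriv M z).toReal)) J := by
    have : (fun z => Real.log ((J.rnDeriv M z).toReal))
        =ᵐ[J] fun z => Real.log (J.rnDeriv pm z).toReal - Real.log (ρr z) := by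
      filter_upwards [hlog] with z hz
      rw [hz]; ring
    exact (hint.sub hρint).congr this.symm
  have hgibbs : 0 ≤ ∫ z, Real.log ((J.rnDeriv M z).toReal) ∂J := by
    have h0 : ∫ z, Real.log ((J.rnDeriv M z).toReal) ∂J
        = ∫ z, (J.rnDeriv M z).toReal • Real.log ((J.rnDeriv M z).toReal) ∂M :=
      (integral_rnDeriv_smul hJM).symm
    have hu_int : Integrable (fun z => (J.rnDeriv M z).toReal) M :=
      Measure.integrable_toReal_rnDeriv
    have hul_int : Integrable
        (fun z => (J.rnDeriv M z).toReal • Real.log ((J.rnDeriv M z).toReal)) M :=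
      (integrable_rnDeriv_smul_iff hJM).2 hlogu_int
    have huval : ∫ z, (J.rnDeriv M z).toReal ∂M = 1 := by
      rw [Measure.integral_toReal_rnDeriv hJM]
      simp
    rw [h0]
    have hmono : ∫ z, ((J.rnDeriv M z).toReal - 1) ∂M
        ≤ ∫ z, (J.rnDeriv M z).toReal • Real.log ((J.rnDeriv M z).toReal) ∂M := by
      refine integral_mono (hu_int.sub (integrable_const 1)) hul_int fun z => ?_
      rw [smul_eq_mul]
      exact aux_xlogx ENNReal.toReal_nonneg
    refine le_trans ?_ hmono
    rw [integral_sub hu_int (integrable_const 1), huval, integral_const, smul_eq_mul, mul_one]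
    have : (M Set.univ).toReal ≤ 1 := by
      simpa using ENNReal.toReal_mono ENNReal.one_ne_top hMle
    linarith [show M.real Set.univ = (M Set.univ).toReal from rfl]
  -- conclusion
  calc Real.log (1 + (E:ℝ) / σ2) / 2
      = 0 + ∫ z, Real.log (ρr z) ∂J := by rw [hρval, zero_add]
    _ ≤ (∫ z, Real.log ((J.rnDeriv M z).toReal) ∂J) + ∫ z, Real.log (ρr z) ∂J := by
        exact add_le_add_left hgibbs _
    _ = ∫ z, (Real.log ((J.rnDeriv M z).toReal) + Real.log (ρr z)) ∂J :=
        (integral_add hlogu_int hρint).symm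
    _ = ∫ z, Real.log (J.rnDeriv pm z).toReal ∂J := (integral_congr_ae hlog).symm
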